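/- (Main Lemma) Suppose F : [0,∞) → ℝ satisfies: (1) 1 ≤ F(λ) ≤ e^λ for all λ ≥ 0; (2) F(ηλ) = d·e^{(η−1)λ}·F(λ) + f(λ) for all λ ≥ 0, where 0 < d < 1 and η > 1; (3) f(λ) = O(e^{(η−ε)λ}) as λ → ∞ for some ε > 0. Then there exists a 1-periodic function Φ such that F(λ) = Φ(log_η λ)·λ^α·e^λ + O(e^{(1−ε)λ}) as λ → ∞, where α = log_η d < 0. -/

import Mathlib

open Real Filter Asymptotics

set_option maxHeartbeats 1000000

/-- The Main Lemma: if `1 ≤ F(λ) ≤ e^λ`, `F(ηλ) = d e^{(η-1)λ} F(λ) + f(λ)`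
with `0 < d < 1`, `η > 1`, and `f(λ) = O(e^{(η-ε)λ})` for some `ε > 0`, then
`F(λ) = Φ(log_η λ) λ^α e^λ + O(e^{(1-ε)λ})` as `λ → ∞`, where
`α = log_η d < 0` and `Φ` is `1`-periodic. -/
theorem main_lemma (F f : ℝ → ℝ) (d η ε : ℝ)
    (hd0 : 0 < d) (hd1 : d < 1) (hη : 1 < η) (hε : 0 < ε)
    (h1 : ∀ lam : ℝ, 0 ≤ lam → 1 ≤ F lam ∧ F lam ≤ Real.exp lam)
    (h2 : ∀ lam : ℝ, 0 ≤ lam → F (η * lam) = d * Real.exp ((η - 1) * lam) * F lam + f lam)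
    (h3 : f =O[atTop] fun lam => Real.exp ((η - ε) * lam)) :
    Real.log d / Real.log η < 0 ∧
    ∃ Φ : ℝ → ℝ, (∀ x, Φ (x + 1) = Φ x) ∧
      (fun lam => F lam -
          Φ (Real.log lam / Real.log η) * lam ^ (Real.log d / Real.log η) * Real.exp lam)
        =O[atTop] fun lam => Real.exp ((1 - ε) * lam) := by
  have hη0 : (0:ℝ) < η := lt_trans one_pos hη
  have hlogη : 0 < Real.log η := Real.log_pos hη
  have halpha : Real.log d / Real.log η < 0 :=
    div_neg_of_neg_of_pos (Real.log_neg hd0 hd1) hlogη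
  refine ⟨halpha, ?_⟩
  -- constants from h3
  obtain ⟨C, hC0, hCb⟩ := h3.exists_pos
  obtain ⟨R, hR⟩ := Filter.eventually_atTop.mp hCb.bound
  -- auxiliary functions
  set g : ℝ → ℝ := fun lam => f lam * Real.exp (-(η * lam)) with hgdef
  set G : ℝ → ℝ := fun lam => F lam * Real.exp (-lam) with hGdef
  have hgbound : ∀ lam, R ≤ lam → |g lam| ≤ C * Real.exp (-(ε * lam)) := by
    intro lam hlam
    have := hR lam hlam
    rw [Real.norm_eq_abs, Real.norm_eq_abs, Real.abs_exp] at this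
    have h2' : |g lam| = |f lam| * Real.exp (-(η * lam)) := by
      rw [hgdef]; simp [abs_mul, Real.abs_exp]
    rw [h2']
    calc |f lam| * Real.exp (-(η * lam)) ≤ (C * Real.exp ((η - ε) * lam)) * Real.exp (-(η * lam)) := by
          exact mul_le_mul_of_nonneg_right this (Real.exp_pos _).le
      _ = C * Real.exp (-(ε * lam)) := by
          rw [mul_assoc, ← Real.exp_add]; ring_nf
  have hGfe : ∀ lam : ℝ, 0 ≤ lam → G (η * lam) = d * G lam + g lam := by
    intro lam hlam
    have hx : Real.exp ((η - 1) * lam) * Real.exp (-(η * lam)) = Real.exp (-lam) := by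
      rw [← Real.exp_add]; ring_nf
    simp only [hGdef, hgdef, h2 lam hlam]
    linear_combination d * F lam * hx
  -- threshold
  set lam0 : ℝ := max (max R 1) (Real.log (2 / d) / (ε * (η - 1))) with hlam0def
  have hlam0R : R ≤ lam0 := le_trans (le_max_left _ _) (le_max_left _ _)
  have hlam01 : (1:ℝ) ≤ lam0 := le_trans (le_max_right _ _) (le_max_left _ _)
  have hlam00 : (0:ℝ) < lam0 := lt_of_lt_of_le one_pos hlam01
  have hεη : 0 < ε * (η - 1) := mul_pos hε (by linarith)
  have hhalf : ∀ lam, lam0 ≤ lam → Real.exp (-(ε * (η - 1) * lam)) ≤ d / 2 := by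
    intro lam hlam
    have h1' : Real.log (2 / d) / (ε * (η - 1)) ≤ lam :=
      le_trans (le_max_right _ _) hlam
    have h2' : Real.log (2 / d) ≤ ε * (η - 1) * lam := by
      rw [div_le_iff₀ hεη] at h1'; linarith [h1']
    have h3' : Real.exp (-(ε * (η - 1) * lam)) ≤ Real.exp (-(Real.log (2 / d))) := by
      apply Real.exp_le_exp.mpr; linarith
    have h4' : Real.exp (-(Real.log (2 / d))) = d / 2 := by
      rw [Real.exp_neg, Real.exp_log (by positivity)]
      field_simp
    linarith [h3', h4'.le]
  -- the series term
  set T : ℝ → ℕ → ℝ := fun lam k => (d ^ (k + 1))⁻¹ * g (η ^ k * lam) with hTdef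
  have hηpow1 : ∀ k : ℕ, (1:ℝ) ≤ η ^ k := fun k => one_le_pow₀ hη.le -- maybe wrong name
  have hterm : ∀ lam, lam0 ≤ lam → ∀ k : ℕ,
      |T lam k| ≤ (C / d * Real.exp (-(ε * lam))) * (1 / 2) ^ k := by
    intro lam hlam k
    have hlamnn : (0:ℝ) ≤ lam := le_trans hlam00.le hlam
    have hmono : lam ≤ η ^ k * lam := le_mul_of_one_le_left hlamnn (hηpow1 k)
    have hgb := hgbound (η ^ k * lam) (le_trans hlam0R (le_trans hlam hmono))
    have hTabs : |T lam k| = (d ^ (k + 1))⁻¹ * |g (η ^ k * lam)| := by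
      rw [hTdef]; simp [abs_mul, abs_inv, abs_pow, abs_of_pos hd0]
    rw [hTabs]
    have hdpow : (0:ℝ) < (d ^ (k + 1))⁻¹ := by positivity
    calc (d ^ (k + 1))⁻¹ * |g (η ^ k * lam)|
        ≤ (d ^ (k + 1))⁻¹ * (C * Real.exp (-(ε * (η ^ k * lam)))) :=
          mul_le_mul_of_nonneg_left hgb hdpow.le
      _ ≤ (C / d * Real.exp (-(ε * lam))) * (1 / 2) ^ k := by
          -- key inequality
          have hkey : Real.exp (-(ε * (η ^ k * lam))) ≤ Real.exp (-(ε * lam)) * (d / 2) ^ k := by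
            have hber : 1 + (k : ℝ) * (η - 1) ≤ η ^ k := by
              have := one_add_mul_le_pow (a := η - 1) (by linarith) k
              simpa using this
            have step1 : Real.exp (-(ε * (η ^ k * lam)))
                ≤ Real.exp (-(ε * lam)) * Real.exp (-(ε * (η - 1) * lam)) ^ k := by
              rw [← Real.exp_nat_mul, ← Real.exp_add]
              apply Real.exp_le_exp.mpr
              have : (1 + (k:ℝ) * (η - 1)) * lam ≤ η ^ k * lam :=
                mul_le_mul_of_nonneg_right hber hlamnn
              nlinarith [hε, this]
            have step2 : Real.exp (-(ε * (η - 1) * lam)) ^ k ≤ (d / 2) ^ k :=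
              pow_le_pow_left₀ (Real.exp_pos _).le (hhalf lam hlam) k
            calc Real.exp (-(ε * (η ^ k * lam)))
                ≤ Real.exp (-(ε * lam)) * Real.exp (-(ε * (η - 1) * lam)) ^ k := step1
              _ ≤ Real.exp (-(ε * lam)) * (d / 2) ^ k :=
                  mul_le_mul_of_nonneg_left step2 (Real.exp_pos _).le
          calc (d ^ (k + 1))⁻¹ * (C * Real.exp (-(ε * (η ^ k * lam))))
              ≤ (d ^ (k + 1))⁻¹ * (C * (Real.exp (-(ε * lam)) * (d / 2) ^ k)) := by
                apply mul_le_mul_of_nonneg_left _ hdpow.le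
                exact mul_le_mul_of_nonneg_left hkey hC0.le
            _ = (C / d * Real.exp (-(ε * lam))) * (1 / 2) ^ k := by
                rw [pow_succ]
                field_simp
                ring
  have hgeom : Summable (fun k : ℕ => (C / d * Real.exp (-(ε * 0))) * (1 / 2 : ℝ) ^ k) := by
    exact (summable_geometric_of_lt_one (r := (1/2:ℝ)) (by norm_num) (by norm_num)).mul_left _
  have hsum : ∀ lam, lam0 ≤ lam → Summable (fun k => T lam k) := by
    intro lam hlam
    apply Summable.of_norm_bounded ((summable_geometric_of_lt_one (r := (1/2:ℝ)) (by norm_num) (by norm_num)).mul_left (C / d * Real.exp (-(ε * lam))))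
    intro k
    rw [Real.norm_eq_abs]
    exact hterm lam hlam k
  -- the corrected function
  set S : ℝ → ℝ := fun lam => ∑' k : ℕ, T lam k with hSdef
  have hSbound : ∀ lam, lam0 ≤ lam → |S lam| ≤ (2 * (C / d)) * Real.exp (-(ε * lam)) := by
    intro lam hlam
    have hgeom' : Summable (fun k : ℕ => (C / d * Real.exp (-(ε * lam))) * (1 / 2 : ℝ) ^ k) :=
      (summable_geometric_of_lt_one (r := (1/2:ℝ)) (by norm_num) (by norm_num)).mul_left _
    have hsn : Summable (fun k => ‖T lam k‖) := by
      refine hgeom'.of_nonneg_of_le (fun k => norm_nonneg _) (fun k => ?_)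
      rw [Real.norm_eq_abs]
      exact hterm lam hlam k
    calc |S lam| ≤ ∑' k, ‖T lam k‖ := by
          rw [← Real.norm_eq_abs]; exact norm_tsum_le_tsum_norm hsn
      _ ≤ ∑' k : ℕ, (C / d * Real.exp (-(ε * lam))) * (1 / 2 : ℝ) ^ k := by
          refine hsn.tsum_le_tsum (fun k => ?_) hgeom'
          rw [Real.norm_eq_abs]; exact hterm lam hlam k
      _ = (2 * (C / d)) * Real.exp (-(ε * lam)) := by
          rw [tsum_mul_left, tsum_geometric_of_lt_one (by norm_num : (0:ℝ) ≤ 1/2) (by norm_num)]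
          norm_num
          ring
  set Ψ : ℝ → ℝ := fun lam => G lam + S lam with hΨdef
  -- functional equation for Ψ
  have hΨfe : ∀ lam, lam0 ≤ lam → Ψ (η * lam) = d * Ψ lam := by
    intro lam hlam
    have hlamnn : (0:ℝ) ≤ lam := le_trans hlam00.le hlam
    have hshift : ∀ k : ℕ, T (η * lam) k = d * T lam (k + 1) := by
      intro k
      simp only [hTdef]
      have : η ^ k * (η * lam) = η ^ (k + 1) * lam := by ring
      rw [this, pow_succ d (k+1)]
      field_simp
    have hs1 : Summable (fun k => T lam (k + 1)) := by
      exact (summable_nat_add_iff 1).mpr (hsum lam hlam)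
    have hS1 : S (η * lam) = d * (S lam - T lam 0) := by
      rw [hSdef]
      simp only []
      calc (∑' k : ℕ, T (η * lam) k) = ∑' k : ℕ, d * T lam (k + 1) := by
            exact tsum_congr hshift
        _ = d * ∑' k : ℕ, T lam (k + 1) := tsum_mul_left
        _ = d * (S lam - T lam 0) := by
            rw [hSdef]
            congr 1
            have := (hsum lam hlam).tsum_eq_zero_add
            beta_reduce
            linarith [this]
    have hT0 : T lam 0 = d⁻¹ * g lam := by
      simp [hTdef]
    simp only [hΨdef]
    rw [hGfe lam hlamnn, hS1, hT0]
    field_simp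
    ring
  have hΨiter : ∀ n : ℕ, ∀ lam, lam0 ≤ lam → Ψ (η ^ n * lam) = d ^ n * Ψ lam := by
    intro n
    induction n with
    | zero => intro lam _; simp
    | succ n ih =>
      intro lam hlam
      have h1' : lam0 ≤ η ^ n * lam :=
        le_trans hlam (le_mul_of_one_le_left (le_trans hlam00.le hlam) (hηpow1 n))
      calc Ψ (η ^ (n + 1) * lam) = Ψ (η * (η ^ n * lam)) := by ring_nf
        _ = d * Ψ (η ^ n * lam) := hΨfe _ h1'
        _ = d * (d ^ n * Ψ lam) := by rw [ih lam hlam]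
        _ = d ^ (n + 1) * Ψ lam := by ring
  -- choose n0 with η ^ n0 ≥ lam0
  obtain ⟨n0, hn0⟩ := pow_unbounded_of_one_lt lam0 hη
  -- define Φ
  refine ⟨fun x => Ψ (η ^ (Int.fract x + n0)) * d ^ (-(Int.fract x + (n0:ℝ))), ?_, ?_⟩
  · intro x; simp only [Int.fract_add_one]
  · -- the big-O statement
    rw [isBigO_iff]
    refine ⟨2 * (C / d), ?_⟩
    filter_upwards [eventually_ge_atTop (max lam0 (η ^ n0))] with lam hlam
    have hlam1 : lam0 ≤ lam := le_trans (le_max_left _ _) hlam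
    have hlam2 : η ^ n0 ≤ lam := le_trans (le_max_right _ _) hlam
    have hlampos : 0 < lam := lt_of_lt_of_le hlam00 hlam1
    set x : ℝ := Real.log lam / Real.log η with hxdef
    have hlogx : Real.log η * x = Real.log lam := by
      rw [hxdef]; field_simp
    have hηx : (η : ℝ) ^ (x : ℝ) = lam := by
      rw [Real.rpow_def_of_pos hη0, hlogx, Real.exp_log hlampos]
    have hn0x : (n0 : ℝ) ≤ x := by
      rw [hxdef, le_div_iff₀ hlogη]
      have h1' : Real.log (η ^ n0) ≤ Real.log lam :=
        Real.log_le_log (by positivity) hlam2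
      rw [Real.log_pow] at h1'
      linarith [h1']
    have hfloor : (n0 : ℤ) ≤ ⌊x⌋ := by
      rw [Int.le_floor]; exact_mod_cast hn0x
    set m : ℕ := (⌊x⌋ - n0).toNat with hmdef
    have hm : (m : ℝ) = (⌊x⌋ : ℝ) - n0 := by
      rw [hmdef]
      have : ((⌊x⌋ - n0).toNat : ℤ) = ⌊x⌋ - n0 := Int.toNat_of_nonneg (by omega)
      exact_mod_cast this
    set μ : ℝ := η ^ (Int.fract x + (n0:ℝ)) with hμdef
    have hμ0 : lam0 ≤ μ := by
      have h1' : (η:ℝ) ^ ((n0:ℝ)) ≤ μ := by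
        rw [hμdef]
        exact Real.rpow_le_rpow_of_exponent_le hη.le (by linarith [Int.fract_nonneg x])
      rw [Real.rpow_natCast] at h1'
      linarith [hn0.le, h1']
    have hdecomp : (η : ℝ) ^ (m : ℕ) * μ = lam := by
      rw [← Real.rpow_natCast η m, hμdef, ← Real.rpow_add hη0, ← hηx]
      congr 1
      have hfr : Int.fract x = x - ⌊x⌋ := Int.self_sub_floor x ▸ rfl
      rw [hm, hfr]; ring
    have hΨlam : Ψ lam = d ^ (m : ℕ) * Ψ μ := by
      rw [← hdecomp]; exact hΨiter m μ hμ0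
    have hlamα : lam ^ (Real.log d / Real.log η) = d ^ (x : ℝ) := by
      rw [Real.rpow_def_of_pos hlampos, Real.rpow_def_of_pos hd0]
      congr 1
      rw [hxdef]; ring
    have hmatch : Ψ μ * d ^ (-(Int.fract x + (n0:ℝ))) * lam ^ (Real.log d / Real.log η)
        = Ψ lam := by
      rw [hlamα, mul_assoc, ← Real.rpow_add hd0, hΨlam]
      have hexp : -(Int.fract x + (n0:ℝ)) + x = (m : ℝ) := by
        have hfr : Int.fract x = x - ⌊x⌋ := Int.self_sub_floor x ▸ rfl
        rw [hm, hfr]; ring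
      rw [hexp, Real.rpow_natCast]
      ring
    have hkey : F lam - Ψ lam * Real.exp lam = -(S lam * Real.exp lam) := by
      simp only [hΨdef, hGdef]
      rw [Real.exp_neg]
      field_simp
      ring
    show ‖F lam - Ψ (η ^ (Int.fract x + (n0:ℝ))) * d ^ (-(Int.fract x + (n0:ℝ))) *
        lam ^ (Real.log d / Real.log η) * Real.exp lam‖ ≤
        2 * (C / d) * ‖Real.exp ((1 - ε) * lam)‖
    rw [show Ψ (η ^ (Int.fract x + (n0:ℝ))) * d ^ (-(Int.fract x + (n0:ℝ))) *
        lam ^ (Real.log d / Real.log η) = Ψ lam from hmatch, hkey]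
    rw [Real.norm_eq_abs, Real.norm_eq_abs, Real.abs_exp, abs_neg, abs_mul, Real.abs_exp]
    calc |S lam| * Real.exp lam ≤ (2 * (C / d) * Real.exp (-(ε * lam))) * Real.exp lam :=
          mul_le_mul_of_nonneg_right (hSbound lam hlam1) (Real.exp_pos _).le
      _ = 2 * (C / d) * Real.exp ((1 - ε) * lam) := by
          rw [mul_assoc, ← Real.exp_add]; ring_nf
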